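/- arXiv:0802.1571 — 2 statements merged into one kernel-verified Lean document; each statement's English description precedes it below -/
import Mathlib

section
/- Let X be a finite n-dimensional simplicial complex satisfying condition (1_X) and let 0 ≤ i ≤ n−1. For every f ∈ C^i(X), i·(Δf, f) + (n−i)·(f, f) = Σ_{v ∈ V} (Δρ_v f, ρ_v f), where the sum is over all vertices v of X. -/
open Finset

open scoped Classical

variable {V : Type*}

/-- A (finite) simplicial complex on the vertex type `V`: a collection of nonempty
finite sets of vertices (the simplices) closed under passing to nonempty subsets. -/
def IsComplex [DecidableEq V] (K : Finset (Finset V)) : Prop :=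
  (∀ s ∈ K, s.Nonempty) ∧ ∀ s ∈ K, ∀ t : Finset V, t ⊆ s → t.Nonempty → t ∈ K

/-- `K` is `n`-dimensional and satisfies condition `(1_X)`: every simplex has dimension
at most `n` and is a face of some `n`-dimensional simplex (one of cardinality `n+1`). -/
def IsPureDim [DecidableEq V] (K : Finset (Finset V)) (n : ℕ) : Prop :=
  (∀ s ∈ K, s.card ≤ n + 1) ∧ ∀ s ∈ K, ∃ t ∈ K, s ⊆ t ∧ t.card = n + 1

/-- `wt K n s` : the number `w(s)` of `n`-dimensional simplices of `K` containing `s`. -/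
noncomputable def wt [DecidableEq V] (K : Finset (Finset V)) (n : ℕ) (s : Finset V) : ℕ :=
  (K.filter fun t => s ⊆ t ∧ t.card = n + 1).card

/-- An `m`-tuple of vertices is allowed when its entries are distinct and form a simplex
of `K`; i.e. it is an oriented `(m-1)`-simplex of `K`. -/
def Allowed [DecidableEq V] [Fintype V] (K : Finset (Finset V)) {m : ℕ}
    (v : Fin m → V) : Prop :=
  Function.Injective v ∧ Finset.image v Finset.univ ∈ K

/-- `f` is an `(m-1)`-cochain on `K`: a real-valued alternating function on oriented
`(m-1)`-simplices of `K` (realized as a function on all `m`-tuples of vertices which is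
alternating and vanishes on tuples which are not oriented simplices of `K`). -/
def IsCochain [DecidableEq V] [Fintype V] (K : Finset (Finset V)) (m : ℕ)
    (f : (Fin m → V) → ℝ) : Prop :=
  (∀ (σ : Equiv.Perm (Fin m)) (v : Fin m → V),
      f (v ∘ σ) = ((Equiv.Perm.sign σ : ℤ) : ℝ) * f v) ∧
  ∀ v : Fin m → V, ¬ Allowed K v → f v = 0

/-- The inner product `(f,g) = ∑_s w(s)·f(s)·g(s)` on `(m-1)`-cochains, the sum being over
the unoriented `(m-1)`-simplices `s` of `K` (each with an arbitrarily chosen orientation);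
summing over all `m`-tuples counts each simplex `m!` times, whence the normalization. -/
noncomputable def innerC [DecidableEq V] [Fintype V] (K : Finset (Finset V)) (n m : ℕ)
    (f g : (Fin m → V) → ℝ) : ℝ :=
  (∑ v : Fin m → V, (wt K n (Finset.image v Finset.univ) : ℝ) * f v * g v) /
    (Nat.factorial m : ℝ)

/-- The coboundary `d : C^{m-1}(K) → C^m(K)`. -/
noncomputable def cobound [DecidableEq V] [Fintype V] (K : Finset (Finset V)) {m : ℕ}
    (f : (Fin m → V) → ℝ) : (Fin (m + 1) → V) → ℝ :=
  fun v => if Allowed K v then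
    ∑ j : Fin (m + 1), (-1 : ℝ) ^ (j : ℕ) * f (v ∘ Fin.succAbove j)
  else 0

/-- The operator `δ : C^m(K) → C^{m-1}(K)`,
`(δf)(s) = ∑_x (w([x,s])/w(s))·f([x,s])`, the sum being over the vertices `x`
such that `[x,s]` is an oriented simplex of `K`. -/
noncomputable def codiff [DecidableEq V] [Fintype V] (K : Finset (Finset V)) (n : ℕ) {m : ℕ}
    (f : (Fin (m + 1) → V) → ℝ) : (Fin m → V) → ℝ :=
  fun s => ∑ x : V,
    if Allowed K (Fin.cons x s) then
      ((wt K n (Finset.image (Fin.cons x s) Finset.univ) : ℝ) /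
          (wt K n (Finset.image s Finset.univ) : ℝ)) * f (Fin.cons x s)
    else 0

/-- The Laplace operator `Δ = δ ∘ d` on `(m-1)`-cochains. -/
noncomputable def lap [DecidableEq V] [Fintype V] (K : Finset (Finset V)) (n : ℕ) {m : ℕ}
    (f : (Fin m → V) → ℝ) : (Fin m → V) → ℝ :=
  codiff K n (cobound K f)

/-- `ρ_v : C^{m-1}(K) → C^{m-1}(K)`: `(ρ_v f)(s) = f(s)` if `v` is a vertex of `s`,
and `0` otherwise. -/
noncomputable def rho [DecidableEq V] {m : ℕ} (v : V) (f : (Fin m → V) → ℝ) :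
    (Fin m → V) → ℝ :=
  fun s => if ∃ j, s j = v then f s else 0

/-- The vertices of `K`. -/
noncomputable def verts [DecidableEq V] [Fintype V] (K : Finset (Finset V)) : Finset V :=
  Finset.univ.filter fun v => {v} ∈ K

/-- The link `Lk(v)` of a vertex `v`: all simplices `s` of `K` with `v ∉ s` and
`s ∪ {v} ∈ K`. -/
noncomputable def linkK [DecidableEq V] (K : Finset (Finset V)) (v : V) :
    Finset (Finset V) :=
  K.filter fun s => v ∉ s ∧ insert v s ∈ K

/-- `τ_v : C^{m}(K) → C^{m-1}(Lk(v))`: `(τ_v f)(s) = f([v,s])` for `s` an oriented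
simplex of the link `Lk(v)`. -/
noncomputable def tau [DecidableEq V] [Fintype V] (K : Finset (Finset V)) (v : V) {m : ℕ}
    (f : (Fin (m + 1) → V) → ℝ) : (Fin m → V) → ℝ :=
  fun s => if Allowed (linkK K v) s then f (Fin.cons v s) else 0

/-- `c` is an eigenvalue of the Laplace operator acting on `(m-1)`-cochains of `K`. -/
def IsEigen [DecidableEq V] [Fintype V] (K : Finset (Finset V)) (n m : ℕ) (c : ℝ) : Prop :=
  ∃ f : (Fin m → V) → ℝ, f ≠ 0 ∧ IsCochain K m f ∧ lap K n f = c • f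

section helper
set_option linter.unusedSectionVars false
variable [Fintype V] [DecidableEq V]

lemma image_cons_univ {m : ℕ} (x : V) (s : Fin m → V) :
    Finset.image (Fin.cons x s) Finset.univ = insert x (Finset.image s Finset.univ) := by
  ext y
  simp only [Finset.mem_image, Finset.mem_univ, true_and, Fin.exists_fin_succ, Fin.cons_zero,
    Fin.cons_succ, Finset.mem_insert]
  tauto

lemma allowed_tail {K : Finset (Finset V)} (hcplx : IsComplex K) {m : ℕ} {x : V}
    {s : Fin (m + 1) → V} (h : Allowed K (Fin.cons x s)) : Allowed K s := by
  constructor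
  · have hs : s = Fin.cons x s ∘ Fin.succ := rfl
    rw [hs]
    exact h.1.comp (Fin.succ_injective _)
  · refine hcplx.2 _ h.2 _ ?_ ?_
    · rw [image_cons_univ]; exact Finset.subset_insert _ _
    · exact Finset.univ_nonempty.image s

lemma wt_pos {K : Finset (Finset V)} {n : ℕ} (hpure : IsPureDim K n) {s : Finset V}
    (hs : s ∈ K) : 0 < wt K n s := by
  obtain ⟨T, hT, hsub, hcard⟩ := hpure.2 s hs
  exact Finset.card_pos.mpr ⟨T, Finset.mem_filter.mpr ⟨hT, hsub, hcard⟩⟩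

lemma coface_count {K : Finset (Finset V)} {n i : ℕ} (hcplx : IsComplex K)
    (hi : i + 1 ≤ n) {s : Fin (i + 1) → V} (hs : Allowed K s) :
    ∑ x : V, (if Allowed K (Fin.cons x s) then
        (wt K n (Finset.image (Fin.cons x s) Finset.univ) : ℝ) else 0)
      = ((n : ℝ) - (i : ℝ)) * (wt K n (Finset.image s Finset.univ) : ℝ) := by
  have hcardS : (Finset.image s Finset.univ).card = i + 1 := by
    rw [Finset.card_image_of_injective _ hs.1, Finset.card_univ, Fintype.card_fin]
  have hnat : (∑ x : V, if Allowed K (Fin.cons x s) then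
        wt K n (Finset.image (Fin.cons x s) Finset.univ) else 0)
      = (n - i) * wt K n (Finset.image s Finset.univ) := by
    have step1 : ∀ x : V, (if Allowed K (Fin.cons x s) then
          wt K n (Finset.image (Fin.cons x s) Finset.univ) else 0)
        = ∑ T ∈ K, (if Allowed K (Fin.cons x s) ∧
            Finset.image (Fin.cons x s) Finset.univ ⊆ T ∧ T.card = n + 1 then 1 else 0) := by
      intro x
      by_cases hA : Allowed K (Fin.cons x s)
      · simp only [hA, if_true, true_and, wt, Finset.card_filter]
      · simp [hA]
    rw [Finset.sum_congr rfl fun x _ => step1 x, Finset.sum_comm]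
    have step2 : ∀ T ∈ K, (∑ x : V, if Allowed K (Fin.cons x s) ∧
            Finset.image (Fin.cons x s) Finset.univ ⊆ T ∧ T.card = n + 1 then 1 else 0)
        = if Finset.image s Finset.univ ⊆ T ∧ T.card = n + 1 then n - i else 0 := by
      intro T hT
      by_cases hcond : Finset.image s Finset.univ ⊆ T ∧ T.card = n + 1
      · rw [if_pos hcond, ← Finset.card_filter]
        have hset : (Finset.univ.filter fun x : V => Allowed K (Fin.cons x s) ∧
            Finset.image (Fin.cons x s) Finset.univ ⊆ T ∧ T.card = n + 1)
            = T \ Finset.image s Finset.univ := by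
          ext x
          simp only [Finset.mem_filter, Finset.mem_univ, true_and, Finset.mem_sdiff]
          constructor
          · rintro ⟨hA, hsub, -⟩
            refine ⟨hsub (by rw [image_cons_univ]; exact Finset.mem_insert_self _ _), ?_⟩
            intro hx
            obtain ⟨j, -, hj⟩ := Finset.mem_image.mp hx
            exact (Fin.cons_injective_iff.mp hA.1).1 ⟨j, hj⟩
          · rintro ⟨hxT, hxs⟩
            have himg : Finset.image (Fin.cons x s) Finset.univ ⊆ T := by
              rw [image_cons_univ]
              exact Finset.insert_subset hxT hcond.1
            refine ⟨⟨?_, hcplx.2 T hT _ himg (Finset.univ_nonempty.image _)⟩, himg, hcond.2⟩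
            rw [Fin.cons_injective_iff]
            refine ⟨?_, hs.1⟩
            rintro ⟨j, hj⟩
            exact hxs (Finset.mem_image.mpr ⟨j, Finset.mem_univ j, hj⟩)
        rw [hset, Finset.card_sdiff_of_subset hcond.1, hcardS, hcond.2, Nat.succ_sub_succ]
      · rw [if_neg hcond]
        refine Finset.sum_eq_zero fun x _ => ?_
        rw [if_neg]
        rintro ⟨-, hsub, hcard⟩
        refine hcond ⟨?_, hcard⟩
        refine Finset.Subset.trans ?_ hsub
        rw [image_cons_univ]
        exact Finset.subset_insert _ _
    rw [Finset.sum_congr rfl step2, ← Finset.sum_filter, Finset.sum_const, smul_eq_mul,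
      mul_comm]
    rfl
  have hcast : (∑ x : V, if Allowed K (Fin.cons x s) then
        (wt K n (Finset.image (Fin.cons x s) Finset.univ) : ℝ) else 0)
      = ((∑ x : V, if Allowed K (Fin.cons x s) then
        wt K n (Finset.image (Fin.cons x s) Finset.univ) else 0 : ℕ) : ℝ) := by
    push_cast
    exact Finset.sum_congr rfl fun x _ => by split_ifs <;> simp
  rw [hcast, hnat]
  have hin : i ≤ n := le_trans (Nat.le_succ i) hi
  push_cast [Nat.cast_sub hin]
  ring

lemma verts_filter_eq {K : Finset (Finset V)} (hcplx : IsComplex K) {i : ℕ}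
    {s : Fin (i + 1) → V} (hs : Allowed K s) :
    (verts K).filter (fun v => ∃ j, s j = v) = Finset.image s Finset.univ := by
  ext v
  simp only [verts, Finset.mem_filter, Finset.mem_univ, true_and, Finset.mem_image]
  constructor
  · rintro ⟨-, j, rfl⟩
    exact ⟨j, rfl⟩
  · rintro ⟨j, rfl⟩
    refine ⟨hcplx.2 _ hs.2 {s j} ?_ (Finset.singleton_nonempty _), j, rfl⟩
    rw [Finset.singleton_subset_iff]
    exact Finset.mem_image.mpr ⟨j, Finset.mem_univ j, rfl⟩

lemma verts_filter2_eq {K : Finset (Finset V)} (hcplx : IsComplex K) {i : ℕ} {x : V}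
    {s : Fin (i + 1) → V} (k : Fin (i + 1)) (h : Allowed K (Fin.cons x s)) :
    (verts K).filter (fun v =>
        (∃ j, Fin.cons x (s ∘ k.succAbove) j = v) ∧ ∃ j, s j = v)
      = Finset.image (s ∘ k.succAbove) Finset.univ := by
  have hAs : Allowed K s := allowed_tail hcplx h
  ext v
  simp only [verts, Finset.mem_filter, Finset.mem_univ, true_and, Finset.mem_image]
  constructor
  · rintro ⟨-, ⟨j', hj'⟩, j, hj⟩
    cases j' using Fin.cases with
    | zero =>
      rw [Fin.cons_zero] at hj'
      exact absurd ⟨j, hj.trans hj'.symm⟩ (Fin.cons_injective_iff.mp h.1).1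
    | succ l =>
      rw [Fin.cons_succ] at hj'
      exact ⟨l, hj'⟩
  · rintro ⟨l, rfl⟩
    refine ⟨hcplx.2 _ hAs.2 _ ?_ (Finset.singleton_nonempty _), ⟨l.succ, by rw [Fin.cons_succ]⟩,
      k.succAbove l, rfl⟩
    rw [Finset.singleton_subset_iff]
    exact Finset.mem_image.mpr ⟨k.succAbove l, Finset.mem_univ _, rfl⟩

lemma inner_lap_eq {K : Finset (Finset V)} {n i : ℕ} (hcplx : IsComplex K)
    (hpure : IsPureDim K n) (g : (Fin (i + 1) → V) → ℝ) :
    innerC K n (i + 1) (lap K n g) g =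
      (∑ s : Fin (i + 1) → V, ∑ x : V,
        if Allowed K (Fin.cons x s) then
          (wt K n (Finset.image (Fin.cons x s) Finset.univ) : ℝ) *
            ((g s + ∑ k : Fin (i + 1), (-1 : ℝ) ^ ((k : ℕ) + 1) *
                g (Fin.cons x (s ∘ k.succAbove))) * g s)
        else 0) / (Nat.factorial (i + 1) : ℝ) := by
  unfold innerC lap codiff
  congr 1
  refine Finset.sum_congr rfl fun s _ => ?_
  rw [Finset.mul_sum, Finset.sum_mul]
  refine Finset.sum_congr rfl fun x _ => ?_
  by_cases hA : Allowed K (Fin.cons x s)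
  · rw [if_pos hA, if_pos hA]
    have hAs : Allowed K s := allowed_tail hcplx hA
    have hw : (wt K n (Finset.image s Finset.univ) : ℝ) ≠ 0 := by
      exact_mod_cast (wt_pos hpure hAs.2).ne'
    have hco : cobound K g (Fin.cons x s)
        = g s + ∑ k : Fin (i + 1), (-1 : ℝ) ^ ((k : ℕ) + 1) *
            g (Fin.cons x (s ∘ k.succAbove)) := by
      unfold cobound
      rw [if_pos hA, Fin.sum_univ_succ]
      congr 1
      · have h0 : Fin.cons x s ∘ Fin.succ = s := rfl
        simp [Fin.succAbove_zero, h0]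
      · refine Finset.sum_congr rfl fun k _ => ?_
        have hk : Fin.cons x s ∘ (Fin.succ k).succAbove = Fin.cons x (s ∘ k.succAbove) := by
          funext j
          cases j using Fin.cases with
          | zero => simp [Fin.succ_succAbove_zero]
          | succ l => simp [Fin.succ_succAbove_succ]
        rw [hk, Fin.val_succ]
    rw [hco]
    field_simp
  · simp [hA]

lemma rho_mul {m m' : ℕ} (v : V) (f : (Fin m → V) → ℝ)
    (g : (Fin m' → V) → ℝ) (t : Fin m → V) (s : Fin m' → V) :
    rho v f t * rho v g s
      = if (∃ j, t j = v) ∧ ∃ j, s j = v then f t * g s else 0 := by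
  unfold rho
  by_cases h1 : ∃ j, t j = v
  · by_cases h2 : ∃ j, s j = v
    · rw [if_pos h1, if_pos h2, if_pos ⟨h1, h2⟩]
    · rw [if_neg h2, if_neg (fun h : (∃ j, t j = v) ∧ (∃ j, s j = v) => h2 h.2), mul_zero]
  · rw [if_neg h1, if_neg (fun h : (∃ j, t j = v) ∧ (∃ j, s j = v) => h1 h.1), zero_mul]

lemma vert_sum_eq {K : Finset (Finset V)} {n i : ℕ} (hcplx : IsComplex K)
    (f : (Fin (i + 1) → V) → ℝ) (s : Fin (i + 1) → V) (x : V) :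
    (∑ v ∈ verts K,
      if Allowed K (Fin.cons x s) then
        (wt K n (Finset.image (Fin.cons x s) Finset.univ) : ℝ) *
          ((rho v f s + ∑ k : Fin (i + 1), (-1 : ℝ) ^ ((k : ℕ) + 1) *
              rho v f (Fin.cons x (s ∘ k.succAbove))) * rho v f s)
      else 0)
      = (i : ℝ) * (if Allowed K (Fin.cons x s) then
          (wt K n (Finset.image (Fin.cons x s) Finset.univ) : ℝ) *
            ((f s + ∑ k : Fin (i + 1), (-1 : ℝ) ^ ((k : ℕ) + 1) *
                f (Fin.cons x (s ∘ k.succAbove))) * f s)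
        else 0)
      + (if Allowed K (Fin.cons x s) then
          (wt K n (Finset.image (Fin.cons x s) Finset.univ) : ℝ) * (f s * f s) else 0) := by
  by_cases hA : Allowed K (Fin.cons x s)
  · simp only [if_pos hA]
    have hAs : Allowed K s := allowed_tail hcplx hA
    set w : ℝ := (wt K n (Finset.image (Fin.cons x s) Finset.univ) : ℝ) with hwdef
    have e1 : ∑ v ∈ verts K, rho v f s * rho v f s = ((i : ℝ) + 1) * (f s * f s) := by
      have hterm : ∀ v : V, rho v f s * rho v f s
          = if (∃ j, s j = v) then f s * f s else 0 := by
        intro v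
        rw [rho_mul v f f s s]
        simp only [and_self]
      rw [Finset.sum_congr rfl fun v _ => hterm v, ← Finset.sum_filter,
        verts_filter_eq hcplx hAs, Finset.sum_const,
        Finset.card_image_of_injective _ hAs.1, Finset.card_univ, Fintype.card_fin,
        nsmul_eq_mul]
      push_cast; ring
    have e2 : ∀ k : Fin (i + 1), ∑ v ∈ verts K,
        rho v f (Fin.cons x (s ∘ k.succAbove)) * rho v f s
        = (i : ℝ) * (f (Fin.cons x (s ∘ k.succAbove)) * f s) := by
      intro k
      have hinj : Function.Injective (s ∘ k.succAbove) :=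
        hAs.1.comp Fin.succAbove_right_injective
      rw [Finset.sum_congr rfl fun v _ =>
          rho_mul v f f (Fin.cons x (s ∘ k.succAbove)) s, ← Finset.sum_filter,
        verts_filter2_eq hcplx k hA, Finset.sum_const,
        Finset.card_image_of_injective _ hinj, Finset.card_univ, Fintype.card_fin,
        nsmul_eq_mul]
    have expand : ∀ v : V,
        w * ((rho v f s + ∑ k : Fin (i + 1), (-1 : ℝ) ^ ((k : ℕ) + 1) *
            rho v f (Fin.cons x (s ∘ k.succAbove))) * rho v f s)
        = w * (rho v f s * rho v f s)
          + ∑ k : Fin (i + 1), (-1 : ℝ) ^ ((k : ℕ) + 1) *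
              (w * (rho v f (Fin.cons x (s ∘ k.succAbove)) * rho v f s)) := by
      intro v
      rw [add_mul, Finset.sum_mul, mul_add, Finset.mul_sum]
      congr 1
      exact Finset.sum_congr rfl fun k _ => by ring
    rw [Finset.sum_congr rfl fun v _ => expand v, Finset.sum_add_distrib, ← Finset.mul_sum,
      e1, Finset.sum_comm]
    have e3 : ∑ k : Fin (i + 1), ∑ v ∈ verts K, (-1 : ℝ) ^ ((k : ℕ) + 1) *
          (w * (rho v f (Fin.cons x (s ∘ k.succAbove)) * rho v f s))
        = ((i : ℝ) * w * f s) * ∑ k : Fin (i + 1), (-1 : ℝ) ^ ((k : ℕ) + 1) *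
            f (Fin.cons x (s ∘ k.succAbove)) := by
      rw [Finset.mul_sum]
      refine Finset.sum_congr rfl fun k _ => ?_
      rw [← Finset.mul_sum, ← Finset.mul_sum, e2 k]
      ring
    rw [e3]
    ring
  · simp [hA]


end helper

/-- for every `f ∈ C^i(X)`, `0 ≤ i ≤ n-1`,
`i·(Δf,f) + (n-i)·(f,f) = ∑_{v ∈ Ver(X)} (Δρ_v f, ρ_v f)`. -/


theorem garland_local_global_identity
    [Fintype V] [DecidableEq V] (K : Finset (Finset V)) (n i : ℕ)
    (hcplx : IsComplex K) (hpure : IsPureDim K n) (hi : i + 1 ≤ n)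
    (f : (Fin (i + 1) → V) → ℝ) (hf : IsCochain K (i + 1) f) :
    (i : ℝ) * innerC K n (i + 1) (lap K n f) f
      + ((n : ℝ) - (i : ℝ)) * innerC K n (i + 1) f f
      = ∑ v ∈ verts K, innerC K n (i + 1) (lap K n (rho v f)) (rho v f) := by
  have hIL := fun g : (Fin (i + 1) → V) → ℝ => inner_lap_eq hcplx hpure g
  have hIC : innerC K n (i + 1) f f
      = (∑ s : Fin (i + 1) → V, (wt K n (Finset.image s Finset.univ) : ℝ) * f s * f s) /
        (Nat.factorial (i + 1) : ℝ) := rfl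
  simp only [hIL, hIC]
  rw [← Finset.sum_div, ← mul_div_assoc, ← mul_div_assoc, ← add_div]
  congr 1
  symm
  rw [Finset.sum_comm]
  have hper : ∀ s : Fin (i + 1) → V,
      (∑ v ∈ verts K, ∑ x : V,
        if Allowed K (Fin.cons x s) then
          (wt K n (Finset.image (Fin.cons x s) Finset.univ) : ℝ) *
            ((rho v f s + ∑ k : Fin (i + 1), (-1 : ℝ) ^ ((k : ℕ) + 1) *
                rho v f (Fin.cons x (s ∘ k.succAbove))) * rho v f s)
        else 0)
      = (i : ℝ) * (∑ x : V,
          if Allowed K (Fin.cons x s) then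
            (wt K n (Finset.image (Fin.cons x s) Finset.univ) : ℝ) *
              ((f s + ∑ k : Fin (i + 1), (-1 : ℝ) ^ ((k : ℕ) + 1) *
                  f (Fin.cons x (s ∘ k.succAbove))) * f s)
          else 0)
        + ((n : ℝ) - (i : ℝ)) * ((wt K n (Finset.image s Finset.univ) : ℝ) * f s * f s) := by
    intro s
    rw [Finset.sum_comm, Finset.sum_congr rfl fun x _ => vert_sum_eq hcplx f s x,
      Finset.sum_add_distrib, ← Finset.mul_sum]
    congr 1
    by_cases hfs : f s = 0
    · simp [hfs]
    · have hAs : Allowed K s := by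
        by_contra hna
        exact hfs (hf.2 s hna)
      have hsplit : ∀ x : V, (if Allowed K (Fin.cons x s) then
            (wt K n (Finset.image (Fin.cons x s) Finset.univ) : ℝ) * (f s * f s) else 0)
          = (if Allowed K (Fin.cons x s) then
              (wt K n (Finset.image (Fin.cons x s) Finset.univ) : ℝ) else 0) * (f s * f s) := by
        intro x; split_ifs <;> ring
      rw [Finset.sum_congr rfl fun x _ => hsplit x, ← Finset.sum_mul,
        coface_count hcplx hi hAs]
      ring
  rw [Finset.sum_congr rfl fun s _ => hper s, Finset.sum_add_distrib, ← Finset.mul_sum,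
    ← Finset.mul_sum]
end

section
/- Let X be a finite n-dimensional simplicial complex satisfying condition (1_X), let 1 ≤ i ≤ n−1, and let v be a vertex of X. For every f ∈ C^i(X), one has (Δρ_v f, ρ_v f) = (Δ_v τ_v f, τ_v f)_v, where Δ is the Laplace operator on C^i(X) and Δ_v is the Laplace operator on C^{i−1}(Lk(v)). -/
open Finset

open scoped Classical

variable {V : Type*}

set_option linter.unusedSectionVars false

section MyHelpers

variable [Fintype V] [DecidableEq V]

/-- Adjacent-swap antisymmetry. -/
def AdjAlt {m : ℕ} (f : (Fin m → V) → ℝ) : Prop :=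
  ∀ (t : Fin m → V) (a b : Fin m), (a : ℕ) + 1 = (b : ℕ) →
    f (t ∘ ⇑(Equiv.swap a b)) = - f t

lemma my_image_comp_equiv {m : ℕ} (q : Fin m → V) (σ : Equiv.Perm (Fin m)) :
    Finset.image (q ∘ ⇑σ) Finset.univ = Finset.image q Finset.univ := by
  rw [← Finset.image_image, Finset.image_univ_equiv]

lemma my_allowed_comp_equiv (K : Finset (Finset V)) {m : ℕ} (q : Fin m → V)
    (σ : Equiv.Perm (Fin m)) :
    Allowed K (q ∘ ⇑σ) ↔ Allowed K q := by
  unfold Allowed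
  rw [my_image_comp_equiv, Equiv.injective_comp]

lemma my_image_cons {m : ℕ} (x : V) (q : Fin m → V) :
    Finset.image (Fin.cons x q) Finset.univ = insert x (Finset.image q Finset.univ) := by
  ext y
  simp only [Finset.mem_image, Finset.mem_univ, true_and, Finset.mem_insert]
  constructor
  · rintro ⟨k, rfl⟩
    refine Fin.cases ?_ (fun k' => ?_) k
    · left; simp
    · right; exact ⟨k', by simp⟩
  · rintro (rfl | ⟨l, rfl⟩)
    · exact ⟨0, by simp⟩
    · exact ⟨l.succ, by simp⟩

lemma my_allowed_cons_link {K : Finset (Finset V)} (hK : IsComplex K) {m : ℕ} (hm : 0 < m)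
    (v : V) (q : Fin m → V) (hq : ∀ k, q k ≠ v) :
    Allowed K (Fin.cons v q) ↔ Allowed (linkK K v) q := by
  have himg : Finset.image (Fin.cons v q) Finset.univ
      = insert v (Finset.image q Finset.univ) := my_image_cons _ _
  have hvq : v ∉ Finset.image q Finset.univ := by
    simp only [Finset.mem_image, Finset.mem_univ, true_and, not_exists]
    exact fun k => hq k
  constructor
  · rintro ⟨hinj, hmem⟩
    have hq_inj : Function.Injective q := by
      have he : q = Fin.cons v q ∘ Fin.succ := by funext k; simp
      rw [he]
      exact hinj.comp (Fin.succ_injective m)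
    refine ⟨hq_inj, ?_⟩
    rw [linkK, Finset.mem_filter]
    have hne : (Finset.image q Finset.univ).Nonempty :=
      ⟨q ⟨0, hm⟩, Finset.mem_image_of_mem _ (Finset.mem_univ _)⟩
    have hins : insert v (Finset.image q Finset.univ) ∈ K := himg ▸ hmem
    exact ⟨hK.2 _ hins _ (Finset.subset_insert _ _) hne, hvq, hins⟩
  · rintro ⟨hinj, hmem⟩
    rw [linkK, Finset.mem_filter] at hmem
    refine ⟨?_, by rw [himg]; exact hmem.2.2⟩
    rw [Fin.cons_injective_iff]
    exact ⟨by rintro ⟨k, hk⟩; exact hq k hk, hinj⟩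

lemma my_wt_link {K : Finset (Finset V)} (hK : IsComplex K) (n : ℕ) (hn : 1 ≤ n) (v : V)
    (T : Finset V) (hvT : v ∉ T) :
    wt K n (insert v T) = wt (linkK K v) (n - 1) T := by
  unfold wt
  rw [show n - 1 + 1 = n from by omega]
  apply Finset.card_bij (fun t _ => t.erase v)
  · intro t ht
    rw [Finset.mem_filter] at ht
    obtain ⟨htK, hsub, hcard⟩ := ht
    have hvt : v ∈ t := hsub (Finset.mem_insert_self v T)
    have h1 : t.erase v ∈ K := by
      apply hK.2 t htK _ (Finset.erase_subset _ _)
      rw [← Finset.card_pos, Finset.card_erase_of_mem hvt, hcard]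
      omega
    rw [Finset.mem_filter]
    refine ⟨?_, ?_, ?_⟩
    · rw [linkK, Finset.mem_filter]
      exact ⟨h1, Finset.notMem_erase _ _, by rwa [Finset.insert_erase hvt]⟩
    · exact Finset.subset_erase.mpr ⟨(Finset.subset_insert _ _).trans hsub, hvT⟩
    · rw [Finset.card_erase_of_mem hvt, hcard]; omega
  · intro t1 h1 t2 h2 he
    rw [Finset.mem_filter] at h1 h2
    have hv1 : v ∈ t1 := h1.2.1 (Finset.mem_insert_self v T)
    have hv2 : v ∈ t2 := h2.2.1 (Finset.mem_insert_self v T)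
    rw [← Finset.insert_erase hv1, ← Finset.insert_erase hv2, he]
  · intro t' ht'
    rw [Finset.mem_filter] at ht'
    obtain ⟨hlk, hsub, hcard⟩ := ht'
    rw [linkK, Finset.mem_filter] at hlk
    obtain ⟨h1, h2, h3⟩ := hlk
    refine ⟨insert v t', ?_, ?_⟩
    · rw [Finset.mem_filter]
      exact ⟨h3, Finset.insert_subset_insert _ hsub,
        by rw [Finset.card_insert_of_notMem h2, hcard]⟩
    · exact Finset.erase_insert h2

lemma my_swap_succAbove_left {m : ℕ} {a b : Fin (m + 1)} (hab : (a : ℕ) + 1 = (b : ℕ)) :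
    ⇑(Equiv.swap a b) ∘ a.succAbove = b.succAbove := by
  funext k
  simp only [Function.comp_apply]
  rcases lt_trichotomy ((k : ℕ)) ((a : ℕ)) with h | h | h
  · have h1 : Fin.castSucc k < a := by rw [Fin.lt_def]; simpa using h
    have h2 : Fin.castSucc k < b := by rw [Fin.lt_def]; simp; omega
    rw [Fin.succAbove_of_castSucc_lt _ _ h1, Fin.succAbove_of_castSucc_lt _ _ h2]
    exact Equiv.swap_apply_of_ne_of_ne (Fin.ne_of_lt h1) (Fin.ne_of_lt h2)
  · have h1 : a ≤ Fin.castSucc k := by rw [Fin.le_def]; simp; omega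
    have h2 : Fin.castSucc k < b := by rw [Fin.lt_def]; simp; omega
    rw [Fin.succAbove_of_le_castSucc _ _ h1, Fin.succAbove_of_castSucc_lt _ _ h2]
    have hsb : Fin.succ k = b := by apply Fin.ext; rw [Fin.val_succ]; omega
    rw [hsb, Equiv.swap_apply_right]
    apply Fin.ext; simp; omega
  · have h1 : a ≤ Fin.castSucc k := by rw [Fin.le_def]; simp; omega
    have h2 : b ≤ Fin.castSucc k := by rw [Fin.le_def]; simp; omega
    rw [Fin.succAbove_of_le_castSucc _ _ h1, Fin.succAbove_of_le_castSucc _ _ h2]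
    apply Equiv.swap_apply_of_ne_of_ne
    · intro e; rw [← e] at h; simp [Fin.val_succ] at h
    · intro e; rw [← e, Fin.val_succ] at hab; omega

lemma my_swap_succAbove_right {m : ℕ} {a b : Fin (m + 1)} (hab : (a : ℕ) + 1 = (b : ℕ)) :
    ⇑(Equiv.swap a b) ∘ b.succAbove = a.succAbove := by
  funext k
  simp only [Function.comp_apply]
  rcases lt_trichotomy ((k : ℕ)) ((a : ℕ)) with h | h | h
  · have h1 : Fin.castSucc k < a := by rw [Fin.lt_def]; simpa using h
    have h2 : Fin.castSucc k < b := by rw [Fin.lt_def]; simp; omega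
    rw [Fin.succAbove_of_castSucc_lt _ _ h2, Fin.succAbove_of_castSucc_lt _ _ h1]
    exact Equiv.swap_apply_of_ne_of_ne (Fin.ne_of_lt h1) (Fin.ne_of_lt h2)
  · have h2 : Fin.castSucc k < b := by rw [Fin.lt_def]; simp; omega
    have h1 : a ≤ Fin.castSucc k := by rw [Fin.le_def]; simp; omega
    rw [Fin.succAbove_of_castSucc_lt _ _ h2, Fin.succAbove_of_le_castSucc _ _ h1]
    have hca : Fin.castSucc k = a := by apply Fin.ext; simpa using h
    rw [hca, Equiv.swap_apply_left]
    apply Fin.ext; rw [Fin.val_succ]; omega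
  · have h2 : b ≤ Fin.castSucc k := by rw [Fin.le_def]; simp; omega
    have h1 : a ≤ Fin.castSucc k := by rw [Fin.le_def]; simp; omega
    rw [Fin.succAbove_of_le_castSucc _ _ h2, Fin.succAbove_of_le_castSucc _ _ h1]
    apply Equiv.swap_apply_of_ne_of_ne
    · intro e; rw [← e] at h; simp [Fin.val_succ] at h
    · intro e; rw [← e, Fin.val_succ] at hab; omega

lemma my_succAbove_pullback {m : ℕ} {j a b : Fin (m + 1)} (hab : (a : ℕ) + 1 = (b : ℕ))
    (hja : j ≠ a) (hjb : j ≠ b) :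
    ∃ a' b' : Fin m, j.succAbove a' = a ∧ j.succAbove b' = b ∧ (a' : ℕ) + 1 = (b' : ℕ) := by
  have hjva : (j : ℕ) ≠ (a : ℕ) := fun e => hja (Fin.ext e)
  have hjvb : (j : ℕ) ≠ (b : ℕ) := fun e => hjb (Fin.ext e)
  rcases lt_or_gt_of_ne hjva with h | h
  · have ha1 : (a : ℕ) - 1 < m := by have := b.isLt; omega
    have ha2 : (a : ℕ) < m := by have := b.isLt; omega
    refine ⟨⟨(a : ℕ) - 1, ha1⟩, ⟨(a : ℕ), ha2⟩, ?_, ?_, by simp; omega⟩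
    · rw [Fin.succAbove_of_le_castSucc _ _ (by rw [Fin.le_def]; simp; omega)]
      apply Fin.ext; rw [Fin.val_succ]; simp; omega
    · rw [Fin.succAbove_of_le_castSucc _ _ (by rw [Fin.le_def]; simp; omega)]
      apply Fin.ext; rw [Fin.val_succ]; simp; omega
  · have hb : (b : ℕ) < (j : ℕ) := by omega
    have ha2 : (a : ℕ) < m := by have := j.isLt; omega
    have hb2 : (b : ℕ) < m := by have := j.isLt; omega
    refine ⟨⟨(a : ℕ), ha2⟩, ⟨(b : ℕ), hb2⟩, ?_, ?_, by simpa using hab⟩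
    · rw [Fin.succAbove_of_castSucc_lt _ _ (by rw [Fin.lt_def]; simp; omega)]
      apply Fin.ext; simp
    · rw [Fin.succAbove_of_castSucc_lt _ _ (by rw [Fin.lt_def]; simp; omega)]
      apply Fin.ext; simp

lemma my_swap_succAbove_other {m : ℕ} {j a b : Fin (m + 1)} (hab : (a : ℕ) + 1 = (b : ℕ))
    (hja : j ≠ a) (hjb : j ≠ b) :
    ∃ a' b' : Fin m, (a' : ℕ) + 1 = (b' : ℕ) ∧
      ⇑(Equiv.swap a b) ∘ j.succAbove = j.succAbove ∘ ⇑(Equiv.swap a' b') := by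
  obtain ⟨a', b', h1, h2, h3⟩ := my_succAbove_pullback hab hja hjb
  refine ⟨a', b', h3, ?_⟩
  funext k
  simp only [Function.comp_apply]
  by_cases hk : k = a'
  · subst hk
    rw [h1, Equiv.swap_apply_left, Equiv.swap_apply_left, h2]
  · by_cases hk2 : k = b'
    · subst hk2
      rw [h2, Equiv.swap_apply_right, Equiv.swap_apply_right, h1]
    · rw [Equiv.swap_apply_of_ne_of_ne hk hk2,
        Equiv.swap_apply_of_ne_of_ne (h1 ▸ fun e => hk (Fin.succAbove_right_injective e))
          (h2 ▸ fun e => hk2 (Fin.succAbove_right_injective e))]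

lemma my_adjAlt_cobound (K : Finset (Finset V)) {m : ℕ} {g : (Fin m → V) → ℝ}
    (hg : AdjAlt g) : AdjAlt (cobound K g) := by
  intro t a b hab
  have hA : Allowed K (t ∘ ⇑(Equiv.swap a b)) ↔ Allowed K t :=
    my_allowed_comp_equiv K t (Equiv.swap a b)
  unfold cobound
  by_cases h : Allowed K t
  · rw [if_pos (hA.mpr h), if_pos h]
    calc (∑ j : Fin (m + 1), (-1 : ℝ) ^ (j : ℕ) * g ((t ∘ ⇑(Equiv.swap a b)) ∘ j.succAbove))
        = ∑ j : Fin (m + 1), (-1 : ℝ) ^ ((Equiv.swap a b j : Fin (m + 1)) : ℕ) *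
            g ((t ∘ ⇑(Equiv.swap a b)) ∘ (Equiv.swap a b j).succAbove) :=
          (Equiv.sum_comp (Equiv.swap a b)
            (fun j => (-1 : ℝ) ^ (j : ℕ) * g ((t ∘ ⇑(Equiv.swap a b)) ∘ j.succAbove))).symm
      _ = ∑ j : Fin (m + 1), -((-1 : ℝ) ^ (j : ℕ) * g (t ∘ j.succAbove)) := by
          apply Finset.sum_congr rfl
          intro j _
          by_cases hja : j = a
          · subst hja
            rw [Equiv.swap_apply_left]
            have he : (t ∘ ⇑(Equiv.swap j b)) ∘ b.succAbove = t ∘ j.succAbove := by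
              show t ∘ (⇑(Equiv.swap j b) ∘ b.succAbove) = t ∘ j.succAbove
              rw [my_swap_succAbove_right hab]
            rw [he, show ((b : ℕ)) = (j : ℕ) + 1 from hab.symm, pow_succ]
            ring
          · by_cases hjb : j = b
            · subst hjb
              rw [Equiv.swap_apply_right]
              have he : (t ∘ ⇑(Equiv.swap a j)) ∘ a.succAbove = t ∘ j.succAbove := by
                show t ∘ (⇑(Equiv.swap a j) ∘ a.succAbove) = t ∘ j.succAbove
                rw [my_swap_succAbove_left hab]
              rw [he, show ((j : ℕ)) = (a : ℕ) + 1 from hab.symm, pow_succ]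
              ring
            · rw [Equiv.swap_apply_of_ne_of_ne hja hjb]
              obtain ⟨a', b', h3, hcomp⟩ :=
                my_swap_succAbove_other hab hja hjb
              have he : (t ∘ ⇑(Equiv.swap a b)) ∘ j.succAbove
                  = (t ∘ j.succAbove) ∘ ⇑(Equiv.swap a' b') := by
                show t ∘ (⇑(Equiv.swap a b) ∘ j.succAbove)
                    = t ∘ (j.succAbove ∘ ⇑(Equiv.swap a' b'))
                rw [hcomp]
              rw [he, hg _ a' b' h3]
              ring
      _ = -∑ j : Fin (m + 1), (-1 : ℝ) ^ (j : ℕ) * g (t ∘ j.succAbove) := by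
          rw [Finset.sum_neg_distrib]
  · rw [if_neg (fun hh => h (hA.mp hh)), if_neg h, neg_zero]

lemma my_cons_comp_swap {m : ℕ} (x : V) (s : Fin m → V) (a b : Fin m) :
    Fin.cons x (s ∘ ⇑(Equiv.swap a b)) = (Fin.cons x s) ∘ ⇑(Equiv.swap a.succ b.succ) := by
  funext k
  refine Fin.cases ?_ (fun k' => ?_) k
  · simp only [Fin.cons_zero, Function.comp_apply,
      Equiv.swap_apply_of_ne_of_ne (Fin.succ_ne_zero a).symm (Fin.succ_ne_zero b).symm,
      Fin.cons_zero]
  · have hs : Equiv.swap a.succ b.succ k'.succ = (Equiv.swap a b k').succ :=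
      Function.Injective.swap_apply (Fin.succ_injective m) a b k'
    simp only [Fin.cons_succ, Function.comp_apply, hs]

lemma my_adjAlt_codiff (K : Finset (Finset V)) (n : ℕ) {m : ℕ}
    {F : (Fin (m + 1) → V) → ℝ} (hF : AdjAlt F) : AdjAlt (codiff K n F) := by
  intro s a b hab
  unfold codiff
  rw [← Finset.sum_neg_distrib]
  apply Finset.sum_congr rfl
  intro x _
  rw [my_cons_comp_swap]
  have hsw : ((a.succ : Fin (m + 1)) : ℕ) + 1 = ((b.succ : Fin (m + 1)) : ℕ) := by
    simp [Fin.val_succ]; omega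
  have hA := my_allowed_comp_equiv K (Fin.cons x s) (Equiv.swap a.succ b.succ)
  by_cases h : Allowed K (Fin.cons x s)
  · rw [if_pos (hA.mpr h), if_pos h, hF _ _ _ hsw, my_image_comp_equiv,
      my_image_comp_equiv]
    ring
  · rw [if_neg (fun hh => h (hA.mp hh)), if_neg h, neg_zero]

lemma my_adjAlt_of_isCochain {K : Finset (Finset V)} {m : ℕ} {f : (Fin m → V) → ℝ}
    (hf : IsCochain K m f) : AdjAlt f := by
  intro t a b hab
  have hne : a ≠ b := by intro e; rw [e] at hab; omega
  rw [hf.1 (Equiv.swap a b) t, Equiv.Perm.sign_swap hne]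
  norm_num

lemma my_isCochain_rho {K : Finset (Finset V)} {m : ℕ} {f : (Fin m → V) → ℝ}
    (hf : IsCochain K m f) (v : V) : IsCochain K m (rho v f) := by
  constructor
  · intro σ w
    unfold rho
    have hiff : (∃ j, (w ∘ ⇑σ) j = v) ↔ (∃ j, w j = v) :=
      ⟨fun ⟨j, hj⟩ => ⟨σ j, hj⟩, fun ⟨j, hj⟩ => ⟨σ.symm j, by simpa using hj⟩⟩
    by_cases h : ∃ j, w j = v
    · rw [if_pos (hiff.mpr h), if_pos h, hf.1]
    · rw [if_neg (fun hh => h (hiff.mp hh)), if_neg h, mul_zero]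
  · intro w hw
    unfold rho
    by_cases h : ∃ j, w j = v
    · rw [if_pos h]; exact hf.2 _ hw
    · rw [if_neg h]

lemma my_cons_comp_succAbove_zero {m : ℕ} (x : V) (w : Fin m → V) :
    (Fin.cons x w) ∘ (Fin.succAbove (0 : Fin (m + 1))) = w := by
  funext k
  simp [Fin.succAbove_zero]

lemma my_cons_comp_succAbove_succ {m : ℕ} (x : V) (w : Fin (m + 1) → V) (k : Fin (m + 1)) :
    (Fin.cons x w) ∘ (Fin.succ k).succAbove = Fin.cons x (w ∘ k.succAbove) := by
  funext l
  refine Fin.cases ?_ (fun l' => ?_) l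
  · simp [Fin.succ_succAbove_zero]
  · simp [Fin.succ_succAbove_succ]

lemma my_cons_cons_swap {m : ℕ} (x y : V) (w : Fin m → V) :
    Fin.cons x (Fin.cons y w)
      = (Fin.cons y (Fin.cons x w)) ∘ ⇑(Equiv.swap (0 : Fin (m + 2)) 1) := by
  funext k
  have h10 : (1 : Fin (m + 2)) = Fin.succ 0 := rfl
  refine Fin.cases ?_ (fun k' => ?_) k
  · simp only [Fin.cons_zero, Function.comp_apply, Equiv.swap_apply_left, h10, Fin.cons_succ]
  · refine Fin.cases ?_ (fun k'' => ?_) k'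
    · simp only [Function.comp_apply, h10, Fin.cons_succ, Fin.cons_zero,
        Equiv.swap_apply_right]
    · have hne1 : (k''.succ.succ : Fin (m + 2)) ≠ 0 := Fin.succ_ne_zero _
      have hne2 : (k''.succ.succ : Fin (m + 2)) ≠ 1 := by
        rw [h10]
        intro e
        exact Fin.succ_ne_zero k'' (Fin.succ_injective _ e)
      simp only [Function.comp_apply, Equiv.swap_apply_of_ne_of_ne hne1 hne2, Fin.cons_succ]

lemma my_f_cons_cons_swap {K : Finset (Finset V)} {m : ℕ} {f : (Fin (m + 2) → V) → ℝ}
    (hf : IsCochain K (m + 2) f) (x y : V) (w : Fin m → V) :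
    f (Fin.cons x (Fin.cons y w)) = - f (Fin.cons y (Fin.cons x w)) := by
  rw [my_cons_cons_swap]
  exact my_adjAlt_of_isCochain hf _ 0 1 (by simp)

lemma my_tau_eq_rho {K : Finset (Finset V)} (hcplx : IsComplex K) {i : ℕ} (hi1 : 1 ≤ i)
    (v : V) {f : (Fin (i + 1) → V) → ℝ} (hf : IsCochain K (i + 1) f)
    (u : Fin i → V) (hu : ∀ l, u l ≠ v) :
    rho v f (Fin.cons v u) = tau K v f u := by
  have h0 : ∃ j, (Fin.cons v u : Fin (i + 1) → V) j = v := ⟨0, by simp⟩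
  unfold rho tau
  by_cases hA : Allowed (linkK K v) u
  · rw [if_pos hA, if_pos h0]
  · rw [if_neg hA, if_pos h0]
    apply hf.2
    intro hAK
    exact hA ((my_allowed_cons_link hcplx (by omega) v u hu).mp hAK)

lemma my_allowed2 {K : Finset (Finset V)} (hcplx : IsComplex K) {i : ℕ}
    (v x : V) (u : Fin i → V) (hu : ∀ l, u l ≠ v) :
    Allowed K (Fin.cons x (Fin.cons v u)) ↔ Allowed (linkK K v) (Fin.cons x u) := by
  by_cases hx : x = v
  · subst hx
    apply iff_of_false
    · rintro ⟨hinj, -⟩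
      rw [Fin.cons_injective_iff] at hinj
      exact hinj.1 ⟨0, by simp⟩
    · rintro ⟨-, hmem⟩
      rw [linkK, Finset.mem_filter] at hmem
      apply hmem.2.1
      rw [my_image_cons]
      exact Finset.mem_insert_self x _
  · rw [my_cons_cons_swap x v u, my_allowed_comp_equiv]
    exact my_allowed_cons_link hcplx (by omega) v (Fin.cons x u)
      (fun k => Fin.cases hx hu k)

lemma my_g_cons_x_u {i : ℕ} (v x : V)
    {f : (Fin (i + 1) → V) → ℝ} (u : Fin i → V) (hx : x ≠ v) (hu : ∀ l, u l ≠ v) :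
    rho v f (Fin.cons x u) = 0 := by
  unfold rho
  rw [if_neg]
  rintro ⟨j, hj⟩
  refine Fin.cases (fun h0 => hx h0) (fun l hl => hu l hl) j hj

lemma my_rho_cons_cons (v x : V) {m : ℕ} (w : Fin m → V) (f : (Fin (m + 2) → V) → ℝ) :
    rho v f (Fin.cons x (Fin.cons v w)) = f (Fin.cons x (Fin.cons v w)) := by
  unfold rho
  rw [if_pos]
  refine ⟨1, ?_⟩
  rw [show (1 : Fin (m + 2)) = Fin.succ 0 from rfl, Fin.cons_succ, Fin.cons_zero]

lemma my_cobound_match {K : Finset (Finset V)} (hcplx : IsComplex K) {i : ℕ}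
    (v : V) {f : (Fin (i + 2) → V) → ℝ} (hf : IsCochain K (i + 2) f)
    (x : V) (u : Fin (i + 1) → V) (hx : x ≠ v) (hu : ∀ l, u l ≠ v) :
    cobound K (rho v f) (Fin.cons x (Fin.cons v u))
      = cobound (linkK K v) (tau K v f) (Fin.cons x u) := by
  have hAiff := my_allowed2 hcplx v x u hu
  unfold cobound
  by_cases hA : Allowed (linkK K v) (Fin.cons x u)
  · rw [if_pos (hAiff.mpr hA), if_pos hA]
    conv_lhs => rw [Fin.sum_univ_succ]
    conv_lhs => rw [Fin.sum_univ_succ]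
    conv_rhs => rw [Fin.sum_univ_succ]
    simp only [Fin.val_zero, pow_zero, one_mul, Fin.val_succ, my_cons_comp_succAbove_zero,
      my_cons_comp_succAbove_succ]
    rw [my_tau_eq_rho hcplx (by omega) v hf u hu, my_g_cons_x_u v x u hx hu]
    have hsum : (∑ l : Fin (i + 1), (-1 : ℝ) ^ ((l : ℕ) + 1 + 1) *
          rho v f (Fin.cons x (Fin.cons v (u ∘ l.succAbove))))
        = ∑ l : Fin (i + 1), (-1 : ℝ) ^ ((l : ℕ) + 1) *
          tau K v f (Fin.cons x (u ∘ l.succAbove)) := by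
      apply Finset.sum_congr rfl
      intro l _
      have hw : ∀ k, (u ∘ l.succAbove) k ≠ v := fun k => hu _
      have hcw : ∀ k, (Fin.cons x (u ∘ l.succAbove) : Fin (i + 1) → V) k ≠ v :=
        fun k => Fin.cases hx hw k
      rw [my_rho_cons_cons, my_f_cons_cons_swap hf x v (u ∘ l.succAbove)]
      unfold tau
      by_cases hAl : Allowed (linkK K v) (Fin.cons x (u ∘ l.succAbove))
      · rw [if_pos hAl, pow_succ, pow_succ]
        ring
      · rw [if_neg hAl]
        have hz : f (Fin.cons v (Fin.cons x (u ∘ l.succAbove))) = 0 := by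
          apply hf.2
          intro hAK
          exact hAl ((my_allowed_cons_link hcplx (by omega) v _ hcw).mp hAK)
        rw [hz]
        ring
    rw [hsum]
    ring
  · rw [if_neg (fun h => hA (hAiff.mp h)), if_neg hA]

lemma my_lap_match {K : Finset (Finset V)} (hcplx : IsComplex K) {i n : ℕ}
    (hn : 1 ≤ n) (v : V) {f : (Fin (i + 2) → V) → ℝ} (hf : IsCochain K (i + 2) f)
    (u : Fin (i + 1) → V) (hu : ∀ l, u l ≠ v) :
    lap K n (rho v f) (Fin.cons v u) = lap (linkK K v) (n - 1) (tau K v f) u := by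
  unfold lap codiff
  apply Finset.sum_congr rfl
  intro x _
  by_cases hA : Allowed (linkK K v) (Fin.cons x u)
  · have hx : x ≠ v := by
      intro e
      subst e
      obtain ⟨-, hmem⟩ := hA
      rw [linkK, Finset.mem_filter] at hmem
      apply hmem.2.1
      rw [my_image_cons]
      exact Finset.mem_insert_self x _
    rw [if_pos ((my_allowed2 hcplx v x u hu).mpr hA), if_pos hA]
    have hvixu : v ∉ Finset.image (Fin.cons x u) Finset.univ := by
      rw [my_image_cons]
      simp only [Finset.mem_insert, Finset.mem_image, Finset.mem_univ, true_and, not_or,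
        not_exists]
      exact ⟨fun e => hx e.symm, fun l e => hu l e⟩
    have hviu : v ∉ Finset.image u Finset.univ := by
      simp only [Finset.mem_image, Finset.mem_univ, true_and, not_exists]
      exact fun l e => hu l e
    have e1 : Finset.image (Fin.cons x (Fin.cons v u)) Finset.univ
        = insert v (Finset.image (Fin.cons x u) Finset.univ) := by
      rw [my_image_cons, my_image_cons, my_image_cons, Finset.insert_comm]
    have e2 : Finset.image (Fin.cons v u) Finset.univ
        = insert v (Finset.image u Finset.univ) := my_image_cons _ _
    rw [e1, e2, my_wt_link hcplx n hn v _ hvixu, my_wt_link hcplx n hn v _ hviu,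
      my_cobound_match hcplx v hf x u hx hu]
  · rw [if_neg (fun h => hA ((my_allowed2 hcplx v x u hu).mp h)), if_neg hA]

lemma my_image_insertNth {m : ℕ} (j : Fin (m + 1)) (x : V) (u : Fin m → V) :
    Finset.image (Fin.insertNth j x u) Finset.univ
      = insert x (Finset.image u Finset.univ) := by
  ext y
  simp only [Finset.mem_image, Finset.mem_univ, true_and, Finset.mem_insert]
  constructor
  · rintro ⟨k, rfl⟩
    by_cases hk : k = j
    · subst hk
      left
      simp
    · obtain ⟨l, rfl⟩ := Fin.exists_succAbove_eq hk
      right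
      exact ⟨l, by simp⟩
  · rintro (rfl | ⟨l, rfl⟩)
    · exact ⟨j, by simp⟩
    · exact ⟨j.succAbove l, by simp⟩

lemma my_insertNth_succ_eq {m : ℕ} (x : V) (u : Fin m → V) (j : Fin m) :
    (Fin.insertNth j.succ x u : Fin (m + 1) → V)
      = Fin.insertNth j.castSucc x u ∘ ⇑(Equiv.swap j.castSucc j.succ) := by
  funext k
  by_cases h1 : k = j.castSucc
  · subst h1
    simp only [Function.comp_apply, Equiv.swap_apply_left]
    have e1 : (j.succ : Fin (m + 1)).succAbove j = j.castSucc := by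
      rw [Fin.succAbove_of_castSucc_lt _ _ (Fin.castSucc_lt_succ (i := j))]
    have e2 : (j.castSucc : Fin (m + 1)).succAbove j = j.succ := by
      rw [Fin.succAbove_of_le_castSucc _ _ (le_refl _)]
    calc (Fin.insertNth j.succ x u : Fin (m + 1) → V) j.castSucc
        = (Fin.insertNth j.succ x u : Fin (m + 1) → V) (j.succ.succAbove j) := by rw [e1]
      _ = u j := by rw [Fin.insertNth_apply_succAbove]
      _ = (Fin.insertNth j.castSucc x u : Fin (m + 1) → V) (j.castSucc.succAbove j) := by
          rw [Fin.insertNth_apply_succAbove]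
      _ = (Fin.insertNth j.castSucc x u : Fin (m + 1) → V) j.succ := by rw [e2]
  · by_cases h2 : k = j.succ
    · subst h2
      simp only [Function.comp_apply, Equiv.swap_apply_right,
        Fin.insertNth_apply_same]
    · simp only [Function.comp_apply, Equiv.swap_apply_of_ne_of_ne h1 h2]
      obtain ⟨l, hl⟩ := Fin.exists_succAbove_eq h1
      have hlj : l ≠ j := by
        rintro rfl
        apply h2
        rw [← hl, Fin.succAbove_of_le_castSucc _ _ (le_refl _)]
      have hsucc : (j.succ : Fin (m + 1)).succAbove l = k := by
        rw [← hl]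
        rcases lt_or_gt_of_ne (fun e => hlj (Fin.ext e) : (l : ℕ) ≠ (j : ℕ)) with h | h
        · rw [Fin.succAbove_of_castSucc_lt _ _ (by rw [Fin.lt_def]; simp; omega),
            Fin.succAbove_of_castSucc_lt _ _ (by rw [Fin.lt_def]; simp; omega)]
        · rw [Fin.succAbove_of_le_castSucc _ _ (by rw [Fin.le_def]; simp; omega),
            Fin.succAbove_of_le_castSucc _ _ (by rw [Fin.le_def]; simp; omega)]
      conv_lhs => rw [← hsucc]
      conv_rhs => rw [← hl]
      rw [Fin.insertNth_apply_succAbove, Fin.insertNth_apply_succAbove]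

lemma my_prod_insertNth {m : ℕ} (v : V) {p q : (Fin (m + 1) → V) → ℝ}
    (hp : AdjAlt p) (hq : AdjAlt q) (u : Fin m → V) (j : Fin (m + 1)) :
    p (Fin.insertNth j v u) * q (Fin.insertNth j v u)
      = p (Fin.cons v u) * q (Fin.cons v u) := by
  induction j using Fin.induction with
  | zero => rw [Fin.insertNth_zero']
  | succ j ih =>
    have hadj : ((j.castSucc : Fin (m + 1)) : ℕ) + 1 = ((j.succ : Fin (m + 1)) : ℕ) := by
      simp
    rw [my_insertNth_succ_eq, hp _ _ _ hadj, hq _ _ _ hadj, neg_mul_neg]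
    exact ih

end MyHelpers

/-- for `1 ≤ i ≤ n-1`, a vertex `v` of `X`, and `f ∈ C^i(X)`,
`(Δρ_v f, ρ_v f) = (Δ_v τ_v f, τ_v f)_v`, where `Δ_v` is the Laplace operator of the
link `Lk(v)` (an `(n-1)`-dimensional complex) acting on `C^{i-1}(Lk(v))`. -/
theorem rho_tau_laplacian
    [Fintype V] [DecidableEq V] (K : Finset (Finset V)) (n i : ℕ)
    (hcplx : IsComplex K) (hpure : IsPureDim K n) (hi1 : 1 ≤ i) (hin : i + 1 ≤ n)
    (v : V) (hv : {v} ∈ K)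
    (f : (Fin (i + 1) → V) → ℝ) (hf : IsCochain K (i + 1) f) :
    innerC K n (i + 1) (lap K n (rho v f)) (rho v f)
      = innerC (linkK K v) (n - 1) i (lap (linkK K v) (n - 1) (tau K v f)) (tau K v f) := by
  obtain ⟨i₀, rfl⟩ : ∃ i', i = i' + 1 := ⟨i - 1, by omega⟩
  have hn1 : 1 ≤ n := by omega
  have hgc : IsCochain K (i₀ + 2) (rho v f) := my_isCochain_rho hf v
  have hga : AdjAlt (rho v f) := my_adjAlt_of_isCochain hgc
  have hlapa : AdjAlt (lap K n (rho v f)) := by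
    unfold lap
    exact my_adjAlt_codiff K n (my_adjAlt_cobound K hga)
  have key1 : ∀ s : Fin (i₀ + 2) → V,
      (wt K n (Finset.image s Finset.univ) : ℝ) * lap K n (rho v f) s * rho v f s
      = ∑ j : Fin (i₀ + 2), if s j = v ∧ (∀ k, k ≠ j → s k ≠ v)
          then (wt K n (Finset.image s Finset.univ) : ℝ) * lap K n (rho v f) s * rho v f s
          else 0 := by
    intro s
    by_cases hv1 : ∃ j, s j = v
    · obtain ⟨j0, hj0⟩ := hv1
      by_cases hv2 : ∀ k, k ≠ j0 → s k ≠ v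
      · rw [Finset.sum_eq_single j0]
        · rw [if_pos ⟨hj0, hv2⟩]
        · intro j _ hne
          rw [if_neg]
          rintro ⟨hjv, -⟩
          exact hv2 j hne hjv
        · intro habs
          exact absurd (Finset.mem_univ j0) habs
      · push_neg at hv2
        obtain ⟨k0, hk0ne, hk0⟩ := hv2
        have hgs : rho v f s = 0 := by
          have hninj : ¬ Function.Injective s := fun hinj => hk0ne (hinj (hk0.trans hj0.symm))
          unfold rho
          rw [if_pos ⟨j0, hj0⟩]
          exact hf.2 s (fun hA => hninj hA.1)
        rw [hgs]
        simp
    · have hgs : rho v f s = 0 := by unfold rho; rw [if_neg hv1]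
      rw [hgs]
      simp
  have key2 : ∀ j : Fin (i₀ + 2),
      (∑ s : Fin (i₀ + 2) → V, if s j = v ∧ (∀ k, k ≠ j → s k ≠ v)
          then (wt K n (Finset.image s Finset.univ) : ℝ) * lap K n (rho v f) s * rho v f s
          else 0)
      = ∑ u : Fin (i₀ + 1) → V,
          (wt (linkK K v) (n - 1) (Finset.image u Finset.univ) : ℝ) *
            lap (linkK K v) (n - 1) (tau K v f) u * tau K v f u := by
    intro j
    rw [← Equiv.sum_comp (Fin.insertNthEquiv (fun _ => V) j)
      (fun s => if s j = v ∧ (∀ k, k ≠ j → s k ≠ v)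
          then (wt K n (Finset.image s Finset.univ) : ℝ) * lap K n (rho v f) s * rho v f s
          else 0), Fintype.sum_prod_type]
    simp only [Fin.insertNthEquiv, Equiv.coe_fn_mk]
    have hcond : ∀ (x : V) (u : Fin (i₀ + 1) → V),
        ((Fin.insertNth j x u : Fin (i₀ + 2) → V) j = v ∧
          (∀ k, k ≠ j → (Fin.insertNth j x u : Fin (i₀ + 2) → V) k ≠ v))
        ↔ (x = v ∧ ∀ l, u l ≠ v) := by
      intro x u
      constructor
      · rintro ⟨h1, h2⟩
        refine ⟨by rwa [Fin.insertNth_apply_same] at h1, fun l => ?_⟩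
        have h3 := h2 (j.succAbove l) (Fin.succAbove_ne j l)
        rwa [Fin.insertNth_apply_succAbove] at h3
      · rintro ⟨rfl, h2⟩
        refine ⟨by rw [Fin.insertNth_apply_same], fun k hk => ?_⟩
        obtain ⟨l, rfl⟩ := Fin.exists_succAbove_eq hk
        rw [Fin.insertNth_apply_succAbove]
        exact h2 l
    calc (∑ x : V, ∑ u : Fin (i₀ + 1) → V,
            if (Fin.insertNth j x u : Fin (i₀ + 2) → V) j = v ∧
                (∀ k, k ≠ j → (Fin.insertNth j x u : Fin (i₀ + 2) → V) k ≠ v)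
            then (wt K n (Finset.image (Fin.insertNth j x u) Finset.univ) : ℝ) *
              lap K n (rho v f) (Fin.insertNth j x u) * rho v f (Fin.insertNth j x u)
            else 0)
        = ∑ u : Fin (i₀ + 1) → V, ∑ x : V,
            (if x = v then
              (if ∀ l, u l ≠ v then
                (wt K n (Finset.image (Fin.insertNth j x u) Finset.univ) : ℝ) *
                  lap K n (rho v f) (Fin.insertNth j x u) * rho v f (Fin.insertNth j x u)
                else 0)
              else 0) := by
          rw [Finset.sum_comm]
          apply Finset.sum_congr rfl
          intro u _
          apply Finset.sum_congr rfl
          intro x _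
          by_cases hx : x = v
          · by_cases hu : ∀ l, u l ≠ v
            · rw [if_pos ((hcond x u).mpr ⟨hx, hu⟩), if_pos hx, if_pos hu]
            · rw [if_neg (fun c => hu ((hcond x u).mp c).2), if_pos hx, if_neg hu]
          · rw [if_neg (fun c => hx ((hcond x u).mp c).1), if_neg hx]
      _ = ∑ u : Fin (i₀ + 1) → V,
            (if ∀ l, u l ≠ v then
              (wt K n (Finset.image (Fin.insertNth j v u) Finset.univ) : ℝ) *
                lap K n (rho v f) (Fin.insertNth j v u) * rho v f (Fin.insertNth j v u)
              else 0) := by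
          apply Finset.sum_congr rfl
          intro u _
          rw [Finset.sum_ite_eq' Finset.univ v, if_pos (Finset.mem_univ v)]
      _ = ∑ u : Fin (i₀ + 1) → V,
            (wt (linkK K v) (n - 1) (Finset.image u Finset.univ) : ℝ) *
              lap (linkK K v) (n - 1) (tau K v f) u * tau K v f u := by
          apply Finset.sum_congr rfl
          intro u _
          by_cases hu : ∀ l, u l ≠ v
          · rw [if_pos hu]
            have hviu : v ∉ Finset.image u Finset.univ := by
              simp only [Finset.mem_image, Finset.mem_univ, true_and, not_exists]
              exact fun l e => hu l e
            have himg : Finset.image (Fin.insertNth j v u) Finset.univ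
                = insert v (Finset.image u Finset.univ) := my_image_insertNth j v u
            rw [himg, mul_assoc, my_prod_insertNth v hlapa hga u j, ← mul_assoc,
              my_wt_link hcplx n hn1 v _ hviu,
              my_lap_match hcplx hn1 v hf u hu,
              my_tau_eq_rho hcplx (by omega) v hf u hu]
          · rw [if_neg hu]
            push_neg at hu
            obtain ⟨l0, hl0⟩ := hu
            have hz : tau K v f u = 0 := by
              unfold tau
              rw [if_neg]
              rintro ⟨-, hmem⟩
              rw [linkK, Finset.mem_filter] at hmem
              exact hmem.2.1 (Finset.mem_image.mpr ⟨l0, Finset.mem_univ l0, hl0⟩)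
            rw [hz, mul_zero]
  have key3 : (∑ s : Fin (i₀ + 2) → V,
        (wt K n (Finset.image s Finset.univ) : ℝ) * lap K n (rho v f) s * rho v f s)
      = ((i₀ : ℝ) + 2) * ∑ u : Fin (i₀ + 1) → V,
          (wt (linkK K v) (n - 1) (Finset.image u Finset.univ) : ℝ) *
            lap (linkK K v) (n - 1) (tau K v f) u * tau K v f u := by
    calc (∑ s : Fin (i₀ + 2) → V,
          (wt K n (Finset.image s Finset.univ) : ℝ) * lap K n (rho v f) s * rho v f s)
        = ∑ s : Fin (i₀ + 2) → V, ∑ j : Fin (i₀ + 2),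
            (if s j = v ∧ (∀ k, k ≠ j → s k ≠ v)
            then (wt K n (Finset.image s Finset.univ) : ℝ) * lap K n (rho v f) s * rho v f s
            else 0) := Finset.sum_congr rfl (fun s _ => key1 s)
      _ = ∑ j : Fin (i₀ + 2), ∑ s : Fin (i₀ + 2) → V,
            (if s j = v ∧ (∀ k, k ≠ j → s k ≠ v)
            then (wt K n (Finset.image s Finset.univ) : ℝ) * lap K n (rho v f) s * rho v f s
            else 0) := Finset.sum_comm
      _ = ∑ _j : Fin (i₀ + 2), ∑ u : Fin (i₀ + 1) → V,
            (wt (linkK K v) (n - 1) (Finset.image u Finset.univ) : ℝ) *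
              lap (linkK K v) (n - 1) (tau K v f) u * tau K v f u :=
          Finset.sum_congr rfl (fun j _ => key2 j)
      _ = ((i₀ : ℝ) + 2) * ∑ u : Fin (i₀ + 1) → V,
            (wt (linkK K v) (n - 1) (Finset.image u Finset.univ) : ℝ) *
              lap (linkK K v) (n - 1) (tau K v f) u * tau K v f u := by
          rw [Finset.sum_const, Finset.card_univ, Fintype.card_fin, nsmul_eq_mul]
          push_cast
          ring
  unfold innerC
  rw [key3, Nat.factorial_succ]
  have h1 : ((i₀ : ℝ) + 2) ≠ 0 := by positivity
  push_cast
  rw [show ((i₀ : ℝ) + 1 + 1) = (i₀ : ℝ) + 2 from by ring, mul_div_mul_left _ _ h1]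
end
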